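/- arXiv:2510.16447 — 5 statements merged into one kernel-verified Lean document; each statement's English description precedes it below -/
import Mathlib

section
/- For all real numbers a, b ∈ [-1, 1], one has -f(b)(a - b) ≥ F(a) - F(b) - 2(a - b)², where F(φ) = (1 - φ²)²/4 and f = -F', i.e. f(φ) = φ - φ³. -/
theorem stmt_1 (F f : ℝ → ℝ) (hF : ∀ φ, F φ = (1 - φ^2)^2 / 4)
    (hf : ∀ φ, f φ = φ - φ^3) :
    ∀ a ∈ Set.Icc (-1 : ℝ) 1, ∀ b ∈ Set.Icc (-1 : ℝ) 1,
      -(f b) * (a - b) ≥ F a - F b - 2 * (a - b)^2 := by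
  rintro a ⟨ha1, ha2⟩ b ⟨hb1, hb2⟩
  rw [hF, hF, hf]
  nlinarith [sq_nonneg (a-b), sq_nonneg (a+b), sq_nonneg (a*b-1), sq_nonneg ((a-b)*(a+b)), mul_nonneg (mul_nonneg (sub_nonneg.2 ha2) (sub_nonneg.2 hb2)) (sq_nonneg (a-b)), mul_nonneg (mul_nonneg (by linarith : (0:ℝ) ≤ a+1) (by linarith : (0:ℝ) ≤ b+1)) (sq_nonneg (a-b))]
end

section
/- For all real numbers a, b ∈ [-1, 1], one has (1/4)[(a² - 1)² - (b² - 1)²] ≤ (((a+b)/2)³ - (a+b)/2)(a - b) + 2(a - b)². -/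
theorem stmt_2 : ∀ a ∈ Set.Icc (-1 : ℝ) 1, ∀ b ∈ Set.Icc (-1 : ℝ) 1,
    (1/4 : ℝ) * ((a^2 - 1)^2 - (b^2 - 1)^2) ≤
      (((a + b)/2)^3 - (a + b)/2) * (a - b) + 2 * (a - b)^2 := by
  rintro a ⟨ha1, ha2⟩ b ⟨hb1, hb2⟩
  have h : (0:ℝ) ≤ 16 - (a^2 - b^2) := by nlinarith
  nlinarith [mul_nonneg (sq_nonneg (a-b)) h]
end

section
/- Let M : ℝ → ℝ satisfy M(s) ≥ 0 for all s, let τ > 0, S₁ ≥ 2, and let φⁿ, φⁿ⁺¹ : ι → ℝ be functions on a finite nonempty index set ι with ‖φⁿ‖_∞ ≤ 1. Suppose L : ι → ℝ is a function satisfying, at an index j where φⁿ⁺¹ attains its maximum, L(j) ≤ 0, and suppose the scheme equation holds pointwise: (1/τ + S₁·M(φⁿ(i)))·φⁿ⁺¹(i) - ε²·M(φⁿ(i))·L(i) = (1/τ)·φⁿ(i) + M(φⁿ(i))·(f(φⁿ(i)) + S₁·φⁿ(i)) for all i, where f(ξ) = ξ - ξ³ and ε > 0. Then φⁿ⁺¹(j)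 ≤ 1. -/
theorem stmt_5 {ι : Type*} [Fintype ι] [Nonempty ι]
    (M : ℝ → ℝ) (hM : ∀ s, 0 ≤ M s)
    (τ S₁ ε : ℝ) (hτ : 0 < τ) (hS₁ : 2 ≤ S₁) (hε : 0 < ε)
    (f : ℝ → ℝ) (hf : ∀ ξ, f ξ = ξ - ξ^3)
    (φn φnp : ι → ℝ) (hφn : ∀ i, |φn i| ≤ 1)
    (L : ι → ℝ) (j : ι) (hj : ∀ i, φnp i ≤ φnp j) (hLj : L j ≤ 0)
    (hscheme : ∀ i, (1/τ + S₁ * M (φn i)) * φnp i - ε^2 * M (φn i) * L i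
      = (1/τ) * φn i + M (φn i) * (f (φn i) + S₁ * φn i)) :
    φnp j ≤ 1 := by
  have hs := hscheme j
  rw [hf] at hs
  have hx := abs_le.mp (hφn j)
  have hMj := hM (φn j)
  have hfb : φn j - (φn j)^3 + S₁ * φn j ≤ S₁ := by
    nlinarith [mul_nonneg (sub_nonneg.2 hx.2) (show (0:ℝ) ≤ S₁ - φn j * (1 + φn j) by nlinarith [hx.1, hx.2])]
  have hτ' : 0 < 1/τ := by positivity
  have hL : ε^2 * M (φn j) * L j ≤ 0 := by
    have : 0 ≤ ε^2 * M (φn j) := by positivity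
    exact mul_nonpos_of_nonneg_of_nonpos this hLj
  have hpos : 0 < 1/τ + S₁ * M (φn j) := by nlinarith
  have key : (1/τ + S₁ * M (φn j)) * φnp j ≤ (1/τ + S₁ * M (φn j)) * 1 := by
    nlinarith [hx.2]
  exact le_of_mul_le_mul_left key hpos
end

section
/- Let M : ℝ → ℝ satisfy M(s) ≥ 0, let τ > 0, S₁ ≥ 2, ε > 0, and let φⁿ, φⁿ⁺¹ : ι → ℝ on a finite nonempty index set with ‖φⁿ‖_∞ ≤ 1. Suppose L : ι → ℝ satisfies L(k) ≥ 0 at an index k where φⁿ⁺¹ attains its minimum, and the scheme equation (1/τ + S₁·M(φⁿ(i)))·φⁿ⁺¹(i) - ε²·M(φⁿ(i))·L(i) = (1/τ)·φⁿ(i) + M(φⁿ(i))·(f(φⁿ(i)) + S₁·φⁿ(i)) holds pointwise, with f(ξ) = ξ - ξ³. Then φⁿ⁺¹(k) ≥ -1. -/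
theorem stmt_6 {ι : Type*} [Fintype ι] [Nonempty ι]
    (M : ℝ → ℝ) (hM : ∀ s, 0 ≤ M s)
    (τ S₁ ε : ℝ) (hτ : 0 < τ) (hS₁ : 2 ≤ S₁) (hε : 0 < ε)
    (f : ℝ → ℝ) (hf : ∀ ξ, f ξ = ξ - ξ^3)
    (φn φnp : ι → ℝ) (hφn : ∀ i, |φn i| ≤ 1)
    (L : ι → ℝ) (k : ι) (hk : ∀ i, φnp k ≤ φnp i) (hLk : 0 ≤ L k)
    (hscheme : ∀ i, (1/τ + S₁ * M (φn i)) * φnp i - ε^2 * M (φn i) * L i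
      = (1/τ) * φn i + M (φn i) * (f (φn i) + S₁ * φn i)) :
    -1 ≤ φnp k := by
  have h := hscheme k
  rw [hf] at h
  have ha := hM (φn k)
  have h1 := abs_le.mp (hφn k)
  have hτ' : 0 < 1/τ := by positivity
  have hfac : 0 ≤ (1 + φn k) * (S₁ + φn k - (φn k)^2) := by
    apply mul_nonneg <;> nlinarith [h1.1, h1.2]
  have hcoef : 0 < 1/τ + S₁ * M (φn k) := by nlinarith
  nlinarith [mul_nonneg (mul_nonneg (sq_nonneg ε) ha) hLk]
end

section
/- Let (eⁿ)_{n=0}^{N} be nonnegative reals with e⁰ = 0, e¹ ≤ A, and eⁿ⁺¹ ≤ eⁿ + C·τ_{n+1}·(eⁿ + eⁿ⁻¹ + B) for 1 ≤ n ≤ N-1, where A, B, C ≥ 0 and τₙ > 0 with Σ τₙ = T. Then eⁿ ≤ exp(2CT)·(A + C·T·B) for all 0 ≤ n ≤ N. -/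
theorem stmt_10 (N : ℕ) (e τ : ℕ → ℝ) (A B C T : ℝ)
    (hA : 0 ≤ A) (hB : 0 ≤ B) (hC : 0 ≤ C)
    (he : ∀ n ≤ N, 0 ≤ e n) (hτ : ∀ n, 1 ≤ n → n ≤ N → 0 < τ n)
    (hT : ∑ k ∈ Finset.Icc 1 N, τ k = T)
    (he0 : e 0 = 0) (he1 : e 1 ≤ A)
    (hrec : ∀ n, 1 ≤ n → n ≤ N - 1 → e (n+1) ≤ e n + C * τ (n+1) * (e n + e (n-1) + B)) :
    ∀ n ≤ N, e n ≤ Real.exp (2 * C * T) * (A + C * T * B) := by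
  obtain ⟨S, hSdef⟩ : ∃ S : ℕ → ℝ, ∀ n, S n = ∑ k ∈ Finset.Icc 2 n, τ k :=
    ⟨_, fun _ => rfl⟩
  obtain ⟨P, hPdef⟩ : ∃ P : ℕ → ℝ, ∀ n, P n = ∏ k ∈ Finset.Icc 2 n, (1 + 2*C*τ k) :=
    ⟨_, fun _ => rfl⟩
  have hτnn : ∀ k ∈ Finset.Icc 1 N, 0 ≤ τ k := by
    intro k hk
    rw [Finset.mem_Icc] at hk
    exact (hτ k hk.1 hk.2).le
  have hT0 : 0 ≤ T := by
    rw [← hT]; exact Finset.sum_nonneg hτnn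
  have hsub : ∀ n, n ≤ N → Finset.Icc 2 n ⊆ Finset.Icc 1 N := by
    intro n hn k hk
    rw [Finset.mem_Icc] at hk ⊢
    omega
  have hSle : ∀ n, n ≤ N → S n ≤ T := by
    intro n hn
    rw [hSdef, ← hT]
    exact Finset.sum_le_sum_of_subset_of_nonneg (hsub n hn) (fun k hk _ => hτnn k hk)
  have hS0 : ∀ n, n ≤ N → 0 ≤ S n := by
    intro n hn
    rw [hSdef]
    exact Finset.sum_nonneg (fun k hk => hτnn k (hsub n hn hk))
  have hfac1 : ∀ n, n ≤ N → ∀ k ∈ Finset.Icc 2 n, (1:ℝ) ≤ 1 + 2*C*τ k := by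
    intro n hn k hk
    have := hτnn k (hsub n hn hk)
    nlinarith
  have hP1 : ∀ n, n ≤ N → 1 ≤ P n := by
    intro n hn
    rw [hPdef]
    calc (1:ℝ) = ∏ _k ∈ Finset.Icc 2 n, (1:ℝ) := by simp
      _ ≤ ∏ k ∈ Finset.Icc 2 n, (1 + 2*C*τ k) :=
        Finset.prod_le_prod (by intros; norm_num) (hfac1 n hn)
  have hPexp : ∀ n, n ≤ N → P n ≤ Real.exp (2 * C * T) := by
    intro n hn
    have h1 : P n ≤ ∏ k ∈ Finset.Icc 2 n, Real.exp (2*C*τ k) := by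
      rw [hPdef]
      apply Finset.prod_le_prod
      · intro k hk; linarith [hfac1 n hn k hk]
      · intro k hk; linarith [Real.add_one_le_exp (2*C*τ k)]
    have h2 : ∏ k ∈ Finset.Icc 2 n, Real.exp (2*C*τ k) = Real.exp (2*C*S n) := by
      rw [← Real.exp_sum, hSdef]
      simp [Finset.mul_sum]
    rw [h2] at h1
    refine h1.trans (Real.exp_le_exp.mpr ?_)
    have h3 := hSle n hn
    nlinarith
  -- the key Grönwall-type bound
  have key : ∀ n, n ≤ N → e n ≤ (A + C * S n * B) * P n := by
    intro n
    induction n using Nat.strong_induction_on with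
    | _ n ih =>
      match n with
      | 0 =>
        intro _
        have hS : S 0 = 0 := by rw [hSdef]; rfl
        have hP : P 0 = 1 := by rw [hPdef]; rfl
        rw [he0, hS, hP]; nlinarith
      | 1 =>
        intro h1
        have hS : S 1 = 0 := by rw [hSdef]; rfl
        have hP : P 1 = 1 := by rw [hPdef]; rfl
        rw [hS, hP]; nlinarith
      | (m+2) =>
        intro hn
        have hm1 : m + 1 ≤ N := by omega
        have hm : m ≤ N := by omega
        have hrec' := hrec (m+1) (by omega) (by omega)
        simp only [Nat.add_sub_cancel] at hrec'
        have heq : m + 1 + 1 = m + 2 := rfl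
        rw [heq] at hrec'
        have hτpos := hτ (m+2) (by omega) hn
        have hct : 0 ≤ C * τ (m+2) := mul_nonneg hC hτpos.le
        have hS0m1 := hS0 (m+1) hm1
        have hS0m := hS0 m hm
        have hP1' := hP1 (m+1) hm1
        have hP1m := hP1 m hm
        -- monotonicity
        have hSmono : S m ≤ S (m+1) := by
          rw [hSdef, hSdef]
          apply Finset.sum_le_sum_of_subset_of_nonneg
          · intro k hk; rw [Finset.mem_Icc] at hk ⊢; omega
          · intro k hk _; exact hτnn k (hsub (m+1) hm1 hk)
        have hPmono : P m ≤ P (m+1) := by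
          rcases Nat.eq_zero_or_pos m with h0 | h0
          · subst h0
            rw [hPdef, hPdef,
              show Finset.Icc 2 0 = (∅ : Finset ℕ) from rfl,
              show Finset.Icc 2 (0+1) = (∅ : Finset ℕ) from rfl]
          · have hstep : P (m+1) = P m * (1 + 2*C*τ (m+1)) := by
              rw [hPdef, hPdef]
              exact Finset.prod_Icc_succ_top (by omega) _
            have hf : 0 ≤ C * τ (m+1) := mul_nonneg hC (hτ (m+1) (by omega) hm1).le
            rw [hstep]
            nlinarith
        have hQmono : (A + C * S m * B) * P m ≤ (A + C * S (m+1) * B) * P (m+1) := by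
          have h1 : 0 ≤ A + C * S m * B := by positivity
          have h2 : A + C * S m * B ≤ A + C * S (m+1) * B := by
            nlinarith [mul_nonneg (mul_nonneg hC (sub_nonneg.mpr hSmono)) hB]
          exact mul_le_mul h2 hPmono (by linarith) (by positivity)
        have ihm1 := ih (m+1) (by omega) hm1
        have hem : e m ≤ (A + C * S (m+1) * B) * P (m+1) :=
          (ih m (by omega) hm).trans hQmono
        have hSstep : S (m+2) = S (m+1) + τ (m+2) := by
          rw [hSdef, hSdef]
          exact Finset.sum_Icc_succ_top (by omega) τ
        have hPstep : P (m+2) = P (m+1) * (1 + 2*C*τ (m+2)) := by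
          rw [hPdef, hPdef]
          exact Finset.prod_Icc_succ_top (by omega) _
        rw [hSstep, hPstep]
        have hQ1 : 0 ≤ A + C * S (m+1) * B := by positivity
        have h4 : 1 ≤ P (m+1) * (1 + 2*C*τ (m+2)) := by nlinarith
        have h3 : C * τ (m+2) * B ≤ C * τ (m+2) * B * (P (m+1) * (1 + 2*C*τ (m+2))) := by
          nlinarith [mul_nonneg hct hB]
        have h1 : e (m+2) ≤ (A + C * S (m+1) * B) * P (m+1)
            + C * τ (m+2) * (2 * ((A + C * S (m+1) * B) * P (m+1)) + B) := by
          nlinarith [mul_le_mul_of_nonneg_left (add_le_add ihm1 hem) hct]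
        calc e (m+2)
            ≤ ((A + C * S (m+1) * B) * P (m+1)) * (1 + 2*C*τ (m+2))
              + C * τ (m+2) * B := by linarith [h1]
          _ ≤ ((A + C * S (m+1) * B) * P (m+1)) * (1 + 2*C*τ (m+2))
              + C * τ (m+2) * B * (P (m+1) * (1 + 2*C*τ (m+2))) := by linarith [h3]
          _ = (A + C * (S (m+1) + τ (m+2)) * B) * (P (m+1) * (1 + 2*C*τ (m+2))) := by ring
  intro n hn
  have h1 := key n hn
  have h2 : (A + C * S n * B) * P n ≤ (A + C * T * B) * Real.exp (2 * C * T) := by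
    have hq0 : 0 ≤ A + C * S n * B := by have := hS0 n hn; positivity
    have hq : A + C * S n * B ≤ A + C * T * B := by
      nlinarith [mul_nonneg (mul_nonneg hC (sub_nonneg.mpr (hSle n hn))) hB]
    have hp0 : 0 ≤ P n := le_trans zero_le_one (hP1 n hn)
    exact mul_le_mul hq (hPexp n hn) hp0 (by positivity)
  calc e n ≤ (A + C * T * B) * Real.exp (2 * C * T) := h1.trans h2
    _ = Real.exp (2 * C * T) * (A + C * T * B) := by ring
end
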